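/- Let 0 < λ ≤ 1 be real, let B be the backward shift on ℓ²(ℕ, ℂ) given by (Bf)(n) = f(n+1), let (e_n) denote the standard orthonormal basis of ℓ²(ℕ, ℂ), and let E_λ be a bounded linear operator on ℓ²(ℕ, ℂ) satisfying (E_λ f)(n) = Σ_{k=0}^{n} C(n,k) λ^k (1−λ)^{n−k} f(k) for all f and n. If X is a nonzero bounded linear operator on ℓ²(ℕ, ℂ) with (I − B)∘X = λ·(X∘(I − B)), then there exist n₀ ∈ ℕ and a sequence of complex scalars (β_m)_{m∈ℕ} with β₀ ≠ 0 such that X e_n = 0 for all n < n₀ and X e_{n₀+m} = Σ_{j=0}^{m} β_{m−j} · (E_λ e_j) for all m ∈ ℕ. -/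

import Mathlib

theorem stmt12 (l : ℝ) (hl0 : 0 < l) (hl1 : l ≤ 1)
    (B : lp (fun _ : ℕ => ℂ) 2 →L[ℂ] lp (fun _ : ℕ => ℂ) 2)
    (hB : ∀ f (n : ℕ), B f n = f (n+1))
    (E : lp (fun _ : ℕ => ℂ) 2 →L[ℂ] lp (fun _ : ℕ => ℂ) 2)
    (hE : ∀ f (n : ℕ), E f n = ∑ k ∈ Finset.range (n+1),
      (n.choose k : ℂ) * (l:ℂ)^k * (1 - (l:ℂ))^(n-k) * f k)
    (X : lp (fun _ : ℕ => ℂ) 2 →L[ℂ] lp (fun _ : ℕ => ℂ) 2) (hX : X ≠ 0)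
    (hXl : (1 - B).comp X = (l : ℂ) • (X.comp (1 - B))) :
    ∃ (n₀ : ℕ) (β : ℕ → ℂ), β 0 ≠ 0 ∧
      (∀ n < n₀, X (lp.single 2 n (1:ℂ)) = 0) ∧
      ∀ m : ℕ, X (lp.single 2 (n₀ + m) (1:ℂ)) =
        ∑ j ∈ Finset.range (m+1), β (m - j) • E (lp.single 2 j (1:ℂ)) := by
  classical
  set e : ℕ → lp (fun _ : ℕ => ℂ) 2 := fun n => lp.single 2 n (1:ℂ) with he
  set Y : ℕ → ℕ → ℂ := fun j n => (n.choose j : ℂ) * (l:ℂ)^j * (1 - (l:ℂ))^(n-j) with hY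
  -- coordinates of E e_j
  have hEe : ∀ j n, (E (e j) : ∀ _ : ℕ, ℂ) n = Y j n := by
    intro j n
    rw [hE]
    rcases le_or_gt j n with h | h
    · rw [Finset.sum_eq_single j]
      · simp [e, lp.single_apply_self, Y]
      · intro b _ hb
        simp [e, lp.single_apply_ne _ _ _ hb, Pi.single_apply, hb]
      · intro hj
        exact absurd (Finset.mem_range.2 (Nat.lt_succ_of_le h)) hj
    · have h0 : ∀ b ∈ Finset.range (n+1),
          (n.choose b : ℂ) * (l:ℂ)^b * (1 - (l:ℂ))^(n-b) * (e j) b = 0 := by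
        intro b hb
        have : b ≠ j := by
          have := Finset.mem_range.1 hb; omega
        simp [e, lp.single_apply_ne _ _ _ this, Pi.single_apply, this]
      rw [Finset.sum_eq_zero h0]
      simp [Y, Nat.choose_eq_zero_of_lt h]
  -- B on basis vectors
  have hB0 : B (e 0) = 0 := by
    apply lp.ext
    funext n
    rw [hB]
    simp [e, lp.single_apply_ne _ _ _ (Nat.succ_ne_zero n)]
  have hBs : ∀ n, B (e (n+1)) = e n := by
    intro n
    apply lp.ext
    funext k
    rw [hB]
    simp [e, lp.single_apply, Pi.single_apply]
  -- the commutation relation, pointwise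
  have h1 : ∀ f, X f - B (X f) = (l:ℂ) • (X f - X (B f)) := by
    intro f
    have := DFunLike.congr_fun hXl f
    rw [ContinuousLinearMap.smul_apply] at this
    simpa [ContinuousLinearMap.sub_apply, ContinuousLinearMap.comp_apply,
      ContinuousLinearMap.one_apply, ContinuousLinearMap.smul_apply, map_sub] using this
  have hrec : ∀ f (k : ℕ), (X f : ∀ _ : ℕ, ℂ) (k+1)
      = (1 - (l:ℂ)) * (X f : ∀ _ : ℕ, ℂ) k + (l:ℂ) * (X (B f) : ∀ _ : ℕ, ℂ) k := by
    intro f k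
    have h2 := congrFun (congrArg (fun g : lp (fun _ : ℕ => ℂ) 2 => (g : ∀ _ : ℕ, ℂ)) (h1 f)) k
    simp only [lp.coeFn_sub, lp.coeFn_smul, Pi.sub_apply, Pi.smul_apply, smul_eq_mul] at h2
    rw [hB] at h2
    linear_combination -h2
  -- existence of a nonvanishing basis image
  have hex : ∃ n, X (e n) ≠ 0 := by
    by_contra h
    push_neg at h
    apply hX
    ext f
    have hs := lp.hasSum_single (E := fun _ : ℕ => ℂ) (p := 2) (by norm_num) f
    have hs2 := hs.mapL X
    have hz : ∀ i : ℕ, X (lp.single 2 i (f i)) = 0 := by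
      intro i
      have : lp.single 2 i (f i) = (f i) • e i := by
        rw [he]
        rw [← lp.single_smul]
        norm_num
      rw [this, map_smul, h i, smul_zero]
    rw [show (fun i : ℕ => X (lp.single 2 i (f i))) = fun _ => (0 : lp (fun _ : ℕ => ℂ) 2) from funext hz] at hs2
    have := hs2.unique hasSum_zero
    simp [this]
  obtain ⟨n₀, hn0, hlt⟩ : ∃ n₀, X (e n₀) ≠ 0 ∧ ∀ n < n₀, X (e n) = 0 :=
    ⟨Nat.find hex, Nat.find_spec hex, fun n hn => not_not.1 (Nat.find_min hex hn)⟩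
  set β : ℕ → ℂ := fun m => (X (e (n₀ + m)) : ∀ _ : ℕ, ℂ) 0 with hβ
  -- geometric behaviour at n₀
  have hBn : X (B (e n₀)) = 0 := by
    rcases Nat.eq_zero_or_pos n₀ with h | h
    · rw [h, hB0, map_zero]
    · obtain ⟨n, hn⟩ : ∃ n, n₀ = n + 1 := ⟨n₀ - 1, by omega⟩
      rw [hn, hBs, hlt n (by omega)]
  have hgeo : ∀ k, (X (e n₀) : ∀ _ : ℕ, ℂ) (k+1) = (1 - (l:ℂ)) * (X (e n₀) : ∀ _ : ℕ, ℂ) k := by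
    intro k
    have := hrec (e n₀) k
    rw [hBn] at this
    simpa using this
  -- facts about Y
  have hY0 : ∀ j, Y j 0 = if j = 0 then 1 else 0 := by
    intro j
    cases j with
    | zero => simp [Y]
    | succ j => simp [Y, Nat.choose_eq_zero_of_lt (Nat.succ_pos j)]
  have hY0r : ∀ k, Y 0 (k+1) = (1 - (l:ℂ)) * Y 0 k := by
    intro k
    simp [Y, pow_succ]
    ring
  have hYr : ∀ j k, Y (j+1) (k+1) = (1 - (l:ℂ)) * Y (j+1) k + (l:ℂ) * Y j k := by
    intro j k
    rcases Nat.lt_or_ge k j with h | h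
    · have h1 : k + 1 < j + 1 := by omega
      have h2 : k < j + 1 := by omega
      simp [Y, Nat.choose_eq_zero_of_lt h, Nat.choose_eq_zero_of_lt h1,
        Nat.choose_eq_zero_of_lt h2]
    · rcases Nat.eq_or_lt_of_le h with hkj | hkj
      · subst hkj
        simp [Y, Nat.choose_self, Nat.choose_succ_self, pow_succ]
        ring
      · have h1 : j + 1 ≤ k := by omega
        have h2 : (k+1) - (j+1) = (k - (j+1)) + 1 := by omega
        have h3 : k - j = (k - (j+1)) + 1 := by omega
        simp only [Y, Nat.choose_succ_succ k j, Nat.succ_sub_succ, h2, h3]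
        push_cast
        ring
  -- main coordinate identity
  have hmain : ∀ m k, (X (e (n₀ + m)) : ∀ _ : ℕ, ℂ) k
      = ∑ j ∈ Finset.range (m+1), β (m - j) * Y j k := by
    intro m
    induction m with
    | zero =>
      simp only [Nat.add_zero]
      intro k
      induction k with
      | zero => simp [β, hY0]
      | succ k ih =>
        rw [hgeo k, ih, Finset.sum_range_one, Finset.sum_range_one, hY0r]
        ring
    | succ m ihm =>
      intro k
      induction k with
      | zero =>
        rw [Finset.sum_eq_single 0]
        · simp [β, hY0]
        · intro b _ hb
          rw [hY0]
          simp [hb]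
        · simp
      | succ k ihk =>
        have hr := hrec (e (n₀ + m + 1)) k
        rw [show n₀ + m + 1 = (n₀ + m) + 1 from rfl, hBs (n₀ + m)] at hr
        rw [show n₀ + (m + 1) = (n₀ + m) + 1 from rfl] at ihk ⊢
        rw [hr, ihk, ihm k]
        rw [Finset.sum_range_succ' (fun j => β (m + 1 - j) * Y j (k+1)) (m+1),
            Finset.sum_range_succ' (fun j => β (m + 1 - j) * Y j k) (m+1)]
        simp only [Nat.succ_sub_succ, Nat.sub_zero, hYr, hY0r]
        rw [show (∑ i ∈ Finset.range (m+1), β (m - i) * ((1 - (l:ℂ)) * Y (i+1) k + (l:ℂ) * Y i k))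
            = (∑ i ∈ Finset.range (m+1), (1 - (l:ℂ)) * (β (m - i) * Y (i+1) k))
              + (∑ i ∈ Finset.range (m+1), (l:ℂ) * (β (m - i) * Y i k)) from by
          rw [← Finset.sum_add_distrib]
          exact Finset.sum_congr rfl (fun i _ => by ring)]
        rw [← Finset.mul_sum, ← Finset.mul_sum]
        ring
  -- conclude
  refine ⟨n₀, β, ?_, hlt, ?_⟩
  · intro hb0
    apply hn0
    apply lp.ext
    funext k
    have h := hmain 0 k
    rw [Nat.add_zero] at h
    rw [h, Finset.sum_range_one]
    simp [hb0]
  · intro m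
    have h0 : n₀ + m = n₀ + m := rfl
    apply lp.ext
    funext k
    rw [hmain m k]
    rw [lp.coeFn_sum]
    rw [Finset.sum_apply]
    refine Finset.sum_congr rfl (fun j _ => ?_)
    rw [lp.coeFn_smul, Pi.smul_apply, smul_eq_mul, hEe j k]
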